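/- There exist a constant C > 0 and an integer N₀ such that for every integer N ≥ N₀ and all real numbers α, β with 0 ≤ α ≤ 20 and 0 ≤ β ≤ 20, one has ∂L_N/∂γ (α, β, 3/2) ≥ 1/(2N) − C/N² > 0. In particular, under gradient flow the parameter γ is strictly decreasing whenever γ = 3/2 and α, β lie in this range, so γ can never exceed 3/2 in this regime. -/

import Mathlib

noncomputable section

/-- `s = exp(β·e^α / (e^α + 2N − 2))`. -/
def sFun (N : ℕ) (α β : ℝ) : ℝ :=
  Real.exp (β * Real.exp α / (Real.exp α + 2 * (N : ℝ) - 2))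

/-- `r = s + 2N − 1`. -/
def rFun (N : ℕ) (α β : ℝ) : ℝ := sFun N α β + 2 * (N : ℝ) - 1

/-- The loss `L_N(α, β, γ) = γ²·(s² + 2N − 1)/r² − 2γ·s/r + 1`. -/
def Lfun (N : ℕ) (α β γ : ℝ) : ℝ :=
  γ ^ 2 * ((sFun N α β) ^ 2 + (2 * (N : ℝ) - 1)) / (rFun N α β) ^ 2 -
    2 * γ * sFun N α β / rFun N α β + 1

/-- The partial derivative `∂L_N/∂α`. -/
def dLalpha (N : ℕ) (α β γ : ℝ) : ℝ := deriv (fun x => Lfun N x β γ) α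

/-- The partial derivative `∂L_N/∂β`. -/
def dLbeta (N : ℕ) (α β γ : ℝ) : ℝ := deriv (fun x => Lfun N α x γ) β

/-- The partial derivative `∂L_N/∂γ`. -/
def dLgamma (N : ℕ) (α β γ : ℝ) : ℝ := deriv (fun x => Lfun N α β x) γ

set_option maxHeartbeats 800000 in
theorem stmt15 :
    ∃ C : ℝ, 0 < C ∧ ∃ N₀ : ℕ, ∀ N : ℕ, N₀ ≤ N → ∀ α β : ℝ,
      0 ≤ α → α ≤ 20 → 0 ≤ β → β ≤ 20 →
        1 / (2 * (N : ℝ)) - C / (N : ℝ) ^ 2 ≤ dLgamma N α β (3 / 2) ∧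
          0 < 1 / (2 * (N : ℝ)) - C / (N : ℝ) ^ 2 := by
  refine ⟨2 * 10 ^ 11, by norm_num, 10 ^ 12, ?_⟩
  intro N hN α β hα hα' hβ hβ'
  have hn1 : (10 ^ 12 : ℝ) ≤ (N : ℝ) := by exact_mod_cast hN
  set n : ℝ := (N : ℝ) with hn
  have hnpos : (0:ℝ) < n := by linarith
  have hden : (0:ℝ) < Real.exp α + 2 * n - 2 := by
    have := Real.exp_pos α; linarith
  set x : ℝ := β * Real.exp α / (Real.exp α + 2 * n - 2) with hxdef
  have hx0 : 0 ≤ x := div_nonneg (mul_nonneg hβ (Real.exp_pos α).le) hden.le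
  -- exp 20 ≤ 3^20
  have hE : Real.exp 20 ≤ 3 ^ 20 := by
    have h1 : Real.exp 1 ≤ 3 := by linarith [Real.exp_one_lt_d9]
    have h2 : Real.exp 1 ^ (20:ℕ) = Real.exp 20 := by rw [Real.exp_one_pow]; norm_num
    calc Real.exp 20 = Real.exp 1 ^ (20:ℕ) := h2.symm
      _ ≤ 3 ^ (20:ℕ) := pow_le_pow_left₀ (Real.exp_pos 1).le h1 20
  -- n * x ≤ 20 * 3^20
  have hnum : β * Real.exp α ≤ 20 * 3 ^ 20 := by
    have h1 : Real.exp α ≤ Real.exp 20 := Real.exp_le_exp.mpr hα'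
    have := mul_le_mul hβ' (h1.trans hE) (Real.exp_pos α).le (by norm_num)
    linarith
  have hden2 : n ≤ Real.exp α + 2 * n - 2 := by
    have h1 : 1 ≤ Real.exp α := Real.one_le_exp hα
    linarith
  have hnx : n * x ≤ 20 * 3 ^ 20 := by
    have h1 : x ≤ β * Real.exp α / n :=
      div_le_div_of_nonneg_left (mul_nonneg hβ (Real.exp_pos α).le) hnpos hden2
    have h2 : n * (β * Real.exp α / n) = β * Real.exp α := by field_simp
    nlinarith [mul_le_mul_of_nonneg_left h1 hnpos.le]
  have hxhalf : x ≤ 1 / 2 := by nlinarith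
  -- s facts
  set s : ℝ := sFun N α β with hsdef
  have hs : s = Real.exp x := rfl
  have hs1 : 1 ≤ s := by rw [hs]; exact Real.one_le_exp hx0
  have hkey : (1 - x) * s ≤ 1 := by
    have h2 : (1 - x) * Real.exp x ≤ Real.exp (-x) * Real.exp x :=
      mul_le_mul_of_nonneg_right (by linarith [Real.add_one_le_exp (-x)]) (Real.exp_pos x).le
    have h3 : Real.exp (-x) * Real.exp x = 1 := by rw [← Real.exp_add]; simp
    rw [hs]; linarith
  have hs2 : s ≤ 2 := by nlinarith
  have he : s - 1 ≤ 2 * x := by nlinarith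
  have hne : n * (s - 1) ≤ 40 * 3 ^ 20 := by nlinarith
  -- r
  have hr : rFun N α β = s + 2 * n - 1 := rfl
  have hrpos : (0:ℝ) < s + 2 * n - 1 := by linarith
  -- derivative computation
  have hd : HasDerivAt (fun t : ℝ => t ^ 2 * (s ^ 2 + (2 * n - 1)) / (s + 2 * n - 1) ^ 2 -
      2 * t * s / (s + 2 * n - 1) + 1)
      (2 * (3/2 : ℝ) * (s ^ 2 + (2 * n - 1)) / (s + 2 * n - 1) ^ 2 - 2 * s / (s + 2 * n - 1))
      (3/2 : ℝ) := by
    have h1 : HasDerivAt (fun t : ℝ => t ^ 2 * (s ^ 2 + (2 * n - 1)) / (s + 2 * n - 1) ^ 2)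
        (2 * (3/2 : ℝ) * (s ^ 2 + (2 * n - 1)) / (s + 2 * n - 1) ^ 2) (3/2 : ℝ) := by
      have := ((hasDerivAt_pow 2 ((3:ℝ)/2)).mul_const (s ^ 2 + (2 * n - 1))).div_const
        ((s + 2 * n - 1) ^ 2)
      refine this.congr_deriv ?_
      norm_num
    have h2 : HasDerivAt (fun t : ℝ => 2 * t * s / (s + 2 * n - 1))
        (2 * s / (s + 2 * n - 1)) (3/2 : ℝ) := by
      have := (((hasDerivAt_id ((3:ℝ)/2)).const_mul (2:ℝ)).mul_const s).div_const (s + 2 * n - 1)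
      refine this.congr_deriv ?_
      ring
    exact (h1.sub h2).add_const 1
  have hdg : dLgamma N α β (3/2) =
      2 * (3/2 : ℝ) * (s ^ 2 + (2 * n - 1)) / (s + 2 * n - 1) ^ 2 - 2 * s / (s + 2 * n - 1) :=
    hd.deriv
  -- algebraic identity
  have hid : 2 * (3/2 : ℝ) * (s ^ 2 + (2 * n - 1)) / (s + 2 * n - 1) ^ 2 - 2 * s / (s + 2 * n - 1)
      = 1 / (2 * n) - ((2 * n - 1) * (s - 1) * (2 * (2 * n - 1) + 3 - s)) /
        ((2 * n) * (s + 2 * n - 1) ^ 2) := by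
    field_simp
    ring
  -- bound the error term
  have h4 : (0:ℝ) ≤ s - 1 := by linarith
  have hq : (0:ℝ) ≤ 2 * n + 2 * n * s + 1 - s := by nlinarith
  have hL1 : (2 * n - 1) * (s - 1) * (2 * (2 * n - 1) + 3 - s) ≤ 8 * n ^ 2 * (s - 1) := by
    nlinarith [mul_nonneg h4 hq]
  have hL2 : 8 * n ^ 2 * (s - 1) ≤ 8 * n * (40 * 3 ^ 20) := by
    nlinarith [mul_nonneg hnpos.le (sub_nonneg.2 hne)]
  have hmain : ((2 * n - 1) * (s - 1) * (2 * (2 * n - 1) + 3 - s)) /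
      ((2 * n) * (s + 2 * n - 1) ^ 2) ≤ (2 * 10 ^ 11) / n ^ 2 := by
    rw [div_le_div_iff₀ (by positivity) (by positivity)]
    have hA1 : (2 * n - 1) * (s - 1) * (2 * (2 * n - 1) + 3 - s) * n ^ 2 ≤
        (8 * n * (40 * 3 ^ 20)) * n ^ 2 :=
      mul_le_mul_of_nonneg_right (hL1.trans hL2) (sq_nonneg n)
    have hA3 : (2 * n) ^ 2 ≤ (s + 2 * n - 1) ^ 2 := by nlinarith
    have hA4 : (2 * 10 ^ 11 : ℝ) * ((2 * n) * (2 * n) ^ 2) ≤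
        2 * 10 ^ 11 * ((2 * n) * (s + 2 * n - 1) ^ 2) := by
      have := mul_le_mul_of_nonneg_left hA3 (by positivity : (0:ℝ) ≤ 2 * n)
      nlinarith [this]
    have hA5 : (8 * n * (40 * 3 ^ 20)) * n ^ 2 ≤ (2 * 10 ^ 11 : ℝ) * ((2 * n) * (2 * n) ^ 2) := by
      nlinarith [pow_nonneg hnpos.le 3]
    linarith
  have hposC : 0 < 1 / (2 * n) - 2 * 10 ^ 11 / n ^ 2 := by
    rw [sub_pos, div_lt_div_iff₀ (by positivity) (by positivity)]
    nlinarith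
  constructor
  · rw [hdg, hid]; linarith
  · exact hposC
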